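/- Let p be a prime, F a field of characteristic p (e.g. 𝔽_p), and M a finite-dimensional vector space over F. Then P_p(M) = S'_p(M): the F-subspace of T^p(M) spanned by all p-th tensor powers x⊗⋯⊗x equals the space of symmetric tensors of degree p. -/

import Mathlib

open Finset PiTensorProduct

/-- The linear map on the `n`-th tensor power `Tⁿ(M)` permuting the factors by
`σ`: it sends `x₁ ⊗ ⋯ ⊗ xₙ` to `x_{σ⁻¹(1)} ⊗ ⋯ ⊗ x_{σ⁻¹(n)}`. -/
noncomputable def permMap (A M : Type*) [CommRing A] [AddCommGroup M] [Module A M]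
    (n : ℕ) (σ : Equiv.Perm (Fin n)) :
    PiTensorProduct A (fun _ : Fin n => M) →ₗ[A] PiTensorProduct A (fun _ : Fin n => M) :=
  (PiTensorProduct.reindex A (fun _ : Fin n => M) σ).toLinearMap

/-- `S'ₙ(M)`: the submodule of symmetric tensors in `Tⁿ(M)`. -/
noncomputable def symTensors (A M : Type*) [CommRing A] [AddCommGroup M] [Module A M]
    (n : ℕ) : Submodule A (PiTensorProduct A (fun _ : Fin n => M)) :=
  ⨅ σ : Equiv.Perm (Fin n), LinearMap.eqLocus (permMap A M n σ) LinearMap.id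

/-- The symmetrization map `z ↦ ∑_{σ ∈ Sₙ} σ z` on `Tⁿ(M)`. -/
noncomputable def symmetrize (A M : Type*) [CommRing A] [AddCommGroup M] [Module A M]
    (n : ℕ) :
    PiTensorProduct A (fun _ : Fin n => M) →ₗ[A] PiTensorProduct A (fun _ : Fin n => M) :=
  ∑ σ : Equiv.Perm (Fin n), permMap A M n σ

/-- `Pₙ(M)`: the submodule of `Tⁿ(M)` generated by the `n`-th tensor powers
`x ⊗ ⋯ ⊗ x` of elements `x ∈ M`. -/
noncomputable def powersSubmodule (A M : Type*) [CommRing A] [AddCommGroup M] [Module A M]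
    (n : ℕ) : Submodule A (PiTensorProduct A (fun _ : Fin n => M)) :=
  Submodule.span A {z | ∃ x : M, z = PiTensorProduct.tprod A (fun _ : Fin n => x)}

section Aux

variable {F M : Type*} [Field F] [AddCommGroup M] [Module F M] {p : ℕ}

lemma mem_powers (x : M) : (tprod F fun _ : Fin p => x) ∈ powersSubmodule F M p :=
  Submodule.subset_span ⟨x, rfl⟩

/-- inclusion-exclusion: the symmetrization of a pure tensor lies in the span of powers. -/
lemma perm_sum_mem (y : Fin p → M) :
    (∑ σ : Equiv.Perm (Fin p), tprod F fun i => y (σ i)) ∈ powersSubmodule F M p := by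
  classical
  have key : ∑ S : Finset (Fin p), (-1 : ℤ) ^ Sᶜ.card • (tprod F fun _ : Fin p => ∑ i ∈ S, y i)
      = ∑ σ : Equiv.Perm (Fin p), tprod F fun i => y (σ i) := by
    have h1 : ∀ S : Finset (Fin p),
        (tprod F fun _ : Fin p => ∑ i ∈ S, y i)
          = ∑ r : Fin p → Fin p,
              if (∀ i, r i ∈ S) then tprod F (fun i => y (r i)) else 0 := by
      intro S
      rw [(tprod F (s := fun _ : Fin p => M)).map_sum_finset (fun _ j => y j) (fun _ => S)]
      have hps : Fintype.piFinset (fun _ : Fin p => S)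
          = univ.filter (fun r : Fin p → Fin p => ∀ i, r i ∈ S) := by
        ext r; simp [Fintype.mem_piFinset]
      rw [hps, Finset.sum_filter]
    have coef : ∀ r : Fin p → Fin p,
        (∑ S : Finset (Fin p), if (∀ i, r i ∈ S) then ((-1 : ℤ) ^ Sᶜ.card) else 0)
          = if Function.Surjective r then 1 else 0 := by
      intro r
      have cinv : Function.Involutive (fun S : Finset (Fin p) => Sᶜ) := fun S => compl_compl S
      rw [← Equiv.sum_comp (Function.Involutive.toPerm _ cinv)
        (fun S => if (∀ i, r i ∈ S) then ((-1 : ℤ) ^ Sᶜ.card) else 0)]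
      have h2 : ∀ T : Finset (Fin p), (∀ i, r i ∈ Tᶜ) ↔ T ⊆ (univ.image r)ᶜ := by
        intro T
        simp only [Finset.subset_iff, Finset.mem_compl, Finset.mem_image]
        constructor
        · rintro h x hx ⟨i, -, rfl⟩; exact h i hx
        · intro h i hi; exact h hi ⟨i, Finset.mem_univ i, rfl⟩
      calc ∑ T : Finset (Fin p),
            (if (∀ i, r i ∈ (Function.Involutive.toPerm _ cinv) T) then ((-1 : ℤ) ^ ((Function.Involutive.toPerm _ cinv) T)ᶜ.card) else 0)
          = ∑ T : Finset (Fin p), if T ⊆ (univ.image r)ᶜ then ((-1 : ℤ) ^ T.card) else 0 := by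
            refine Finset.sum_congr rfl fun T _ => ?_
            have hco : ((Function.Involutive.toPerm _ cinv) T) = Tᶜ := rfl
            rw [hco, compl_compl, if_congr (h2 T) rfl rfl]
        _ = ∑ T ∈ ((univ.image r)ᶜ).powerset, (-1 : ℤ) ^ T.card := by
            rw [← Finset.sum_filter]
            congr 1
            ext T; simp [Finset.mem_powerset]
        _ = if Function.Surjective r then 1 else 0 := by
            rw [Finset.sum_powerset_neg_one_pow_card]
            have hiff : ((univ.image r)ᶜ = (∅ : Finset (Fin p))) ↔ Function.Surjective r := by
              rw [← Finset.compl_univ, compl_inj_iff]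
              constructor
              · intro h x
                have := Finset.eq_univ_iff_forall.mp h x
                simpa [Finset.mem_image, eq_comm] using this
              · intro h
                apply Finset.eq_univ_iff_forall.mpr
                intro x
                obtain ⟨i, hi⟩ := h x
                exact Finset.mem_image.mpr ⟨i, Finset.mem_univ i, hi⟩
            rw [if_congr hiff rfl rfl]
    calc ∑ S : Finset (Fin p), (-1 : ℤ) ^ Sᶜ.card • (tprod F fun _ : Fin p => ∑ i ∈ S, y i)
        = ∑ S : Finset (Fin p), ∑ r : Fin p → Fin p,
            (if (∀ i, r i ∈ S) then ((-1 : ℤ) ^ Sᶜ.card) else 0) • tprod F (fun i => y (r i)) := by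
          refine Finset.sum_congr rfl fun S _ => ?_
          rw [h1 S]
          refine Eq.trans (map_sum (zsmulAddGroupHom ((-1 : ℤ) ^ Sᶜ.card)) _ Finset.univ) ?_
          refine Finset.sum_congr rfl fun r _ => ?_
          rw [zsmulAddGroupHom_apply]
          split <;> simp <;> exact (zsmulAddGroupHom _).map_zero
      _ = ∑ r : Fin p → Fin p,
            (∑ S : Finset (Fin p), if (∀ i, r i ∈ S) then ((-1 : ℤ) ^ Sᶜ.card) else 0)
              • tprod F (fun i => y (r i)) := by
          rw [Finset.sum_comm]
          exact Finset.sum_congr rfl fun r _ => (Finset.sum_smul).symm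
      _ = ∑ r ∈ univ.filter (fun r : Fin p → Fin p => Function.Surjective r),
            tprod F (fun i => y (r i)) := by
          simp only [coef]
          rw [Finset.sum_filter]
          refine Finset.sum_congr rfl fun r _ => ?_
          split <;> simp
      _ = ∑ σ : Equiv.Perm (Fin p), tprod F fun i => y (σ i) := by
          have himg : Finset.image (fun σ : Equiv.Perm (Fin p) => (DFunLike.coe σ : Fin p → Fin p)) univ
              = univ.filter (fun r => Function.Surjective r) := by
            ext r
            simp only [Finset.mem_image, Finset.mem_univ, true_and, Finset.mem_filter]
            constructor
            · rintro ⟨σ, rfl⟩; exact σ.surjective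
            · intro hr
              exact ⟨Equiv.ofBijective r ⟨Finite.injective_iff_surjective.mpr hr, hr⟩, rfl⟩
          rw [← himg, Finset.sum_image (fun σ _ τ _ h => Equiv.ext (congrFun h))]
  rw [← key]
  exact Submodule.sum_mem _ fun S _ => Submodule.smul_of_tower_mem _ _ (mem_powers _)

lemma stab_card_not_dvd (hp : p.Prime) {ι : Type*} [DecidableEq ι] (g : Fin p → ι)
    (hg : ¬ ∃ c, ∀ i, g i = c) :
    ¬ (p ∣ (univ.filter fun σ : Equiv.Perm (Fin p) => g ∘ σ = g).card) := by
  classical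
  intro hdvd
  set H : Subgroup (Equiv.Perm (Fin p)) :=
    { carrier := {σ | g ∘ σ = g}
      one_mem' := rfl
      mul_mem' := by
        intro a b ha hb
        funext i
        have ha' := congrFun ha (b i)
        have hb' := congrFun hb i
        simpa using ha'.trans hb'
      inv_mem' := by
        intro a ha
        funext i
        have := congrFun ha (a⁻¹ i)
        simpa using this.symm } with hHdef
  have hmem : ∀ σ : Equiv.Perm (Fin p), σ ∈ H ↔ g ∘ σ = g := fun σ => Iff.rfl
  have hcard : Fintype.card H = (univ.filter fun σ : Equiv.Perm (Fin p) => g ∘ σ = g).card := by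
    rw [← Fintype.card_subtype]
    apply Fintype.card_congr
    exact Equiv.refl _
  have : Fact p.Prime := ⟨hp⟩
  obtain ⟨σ, hσ⟩ := exists_prime_orderOf_dvd_card p (by rwa [hcard])
  have hτ : orderOf (σ : Equiv.Perm (Fin p)) = p := by rw [Subgroup.orderOf_coe, hσ]
  set τ : Equiv.Perm (Fin p) := (σ : Equiv.Perm (Fin p)) with hτdef
  have hcycle : τ.IsCycle :=
    Equiv.Perm.isCycle_of_prime_order'' (by simpa using hp) (by simpa using hτ)
  have hsup : τ.support = univ := by
    apply Finset.eq_univ_of_card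
    have := hcycle.orderOf
    rw [hτ] at this
    simp [← this]
  have hall : ∀ x, τ x ≠ x := fun x =>
    Equiv.Perm.mem_support.mp (hsup ▸ Finset.mem_univ x)
  obtain ⟨x, -, hx2⟩ := hcycle
  have hinv : ∀ (k : ℤ) (i : Fin p), g ((τ ^ k) i) = g i := by
    intro k i
    have : τ ^ k ∈ H := H.zpow_mem σ.2 k
    exact congrFun ((hmem _).mp this) i
  apply hg
  refine ⟨g x, fun i => ?_⟩
  obtain ⟨k, hk⟩ := hx2 (hall i)
  rw [← hk, hinv]

lemma orbit_sum_mem (hp : p.Prime) [CharP F p] {ι : Type*} [Fintype ι] [DecidableEq ι]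
    (v : ι → M) (g : Fin p → ι) :
    (∑ h ∈ univ.filter fun h : Fin p → ι => ∃ σ : Equiv.Perm (Fin p), h = g ∘ σ,
      tprod F fun i => v (h i)) ∈ powersSubmodule F M p := by
  classical
  by_cases hg : ∃ c, ∀ i, g i = c
  · obtain ⟨c, hc⟩ := hg
    have hfilt : (univ.filter fun h : Fin p → ι => ∃ σ : Equiv.Perm (Fin p), h = g ∘ σ)
        = {g} := by
      ext h
      simp only [Finset.mem_filter, Finset.mem_univ, true_and, Finset.mem_singleton]
      constructor
      · rintro ⟨σ, rfl⟩; funext i; simp [hc]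
      · rintro rfl; exact ⟨1, by funext i; simp⟩
    rw [hfilt, Finset.sum_singleton]
    have hgc : (fun i : Fin p => v (g i)) = fun _ : Fin p => v c := by funext i; rw [hc]
    rw [hgc]
    exact mem_powers _
  · set c := (univ.filter fun σ : Equiv.Perm (Fin p) => g ∘ σ = g).card with hcdef
    have himg : (univ : Finset (Equiv.Perm (Fin p))).image (fun σ : Equiv.Perm (Fin p) => g ∘ σ)
        = univ.filter fun h : Fin p → ι => ∃ σ : Equiv.Perm (Fin p), h = g ∘ σ := by
      ext h
      simp only [Finset.mem_image, Finset.mem_univ, true_and, Finset.mem_filter]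
      exact ⟨fun ⟨σ, hσ⟩ => ⟨σ, hσ.symm⟩, fun ⟨σ, hσ⟩ => ⟨σ, hσ.symm⟩⟩
    have hfib : ∀ h ∈ (univ : Finset (Equiv.Perm (Fin p))).image (fun σ : Equiv.Perm (Fin p) => g ∘ σ),
        (univ.filter fun σ : Equiv.Perm (Fin p) => g ∘ σ = h).card = c := by
      intro h hh
      obtain ⟨τ, -, rfl⟩ := Finset.mem_image.mp hh
      rw [hcdef]
      apply Finset.card_bij (fun σ _ => σ * τ⁻¹)
      · intro σ hσ
        simp only [Finset.mem_filter, Finset.mem_univ, true_and] at hσ ⊢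
        funext i
        have h1 := congrFun hσ (τ⁻¹ i)
        simpa using h1
      · intro a _ b _ hab
        exact mul_right_cancel hab
      · intro ρ hρ
        simp only [Finset.mem_filter, Finset.mem_univ, true_and] at hρ
        refine ⟨ρ * τ, Finset.mem_filter.mpr ⟨Finset.mem_univ _, ?_⟩, by group⟩
        funext i
        have h1 := congrFun hρ (τ i)
        simpa using h1
    have hkey : (∑ σ : Equiv.Perm (Fin p), tprod F fun i => v ((g ∘ σ) i))
        = c • ∑ h ∈ univ.filter fun h : Fin p → ι => ∃ σ : Equiv.Perm (Fin p), h = g ∘ σ,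
            tprod F fun i => v (h i) := by
      rw [Finset.sum_comp (fun h : Fin p → ι => tprod F fun i => v (h i))
        (fun σ : Equiv.Perm (Fin p) => g ∘ σ)]
      rw [Finset.sum_congr rfl (fun b hb => by rw [hfib b hb])]
      rw [himg]
      exact Finset.sum_nsmul _ _ _
    have hmem : (∑ σ : Equiv.Perm (Fin p), tprod F fun i => v ((g ∘ σ) i))
        ∈ powersSubmodule F M p := by
      have h0 := perm_sum_mem (F := F) (y := fun j => v (g j))
      simpa [Function.comp] using h0
    have hne : (c : F) ≠ 0 := by
      rw [Ne, CharP.cast_eq_zero_iff F p]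
      exact stab_card_not_dvd hp g hg
    have horb : (∑ h ∈ univ.filter fun h : Fin p → ι => ∃ σ : Equiv.Perm (Fin p), h = g ∘ σ,
          tprod F fun i => v (h i))
        = (c : F)⁻¹ • ∑ σ : Equiv.Perm (Fin p), tprod F fun i => v ((g ∘ σ) i) := by
      rw [hkey, ← Nat.cast_smul_eq_nsmul F c, inv_smul_smul₀ hne]
    rw [horb]
    exact Submodule.smul_mem _ _ hmem

/-- Coefficient functional on `Tᵖ(M)` attached to a basis `b` and a multi-index `g`. -/
noncomputable def coeffMap {F M : Type*} [Field F] [AddCommGroup M] [Module F M]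
    {n p : ℕ} (b : Module.Basis (Fin n) F M) (g : Fin p → Fin n) :
    PiTensorProduct F (fun _ : Fin p => M) →ₗ[F] F :=
  PiTensorProduct.lift
    ((MultilinearMap.mkPiAlgebra F (Fin p) F).compLinearMap (fun i => b.coord (g i)))

variable {n : ℕ}

lemma coeff_tprod (b : Module.Basis (Fin n) F M) (g : Fin p → Fin n) (m : Fin p → M) :
    coeffMap b g (tprod F m) = ∏ i, b.repr (m i) (g i) := by
  simp [coeffMap, PiTensorProduct.lift.tprod, MultilinearMap.compLinearMap_apply,
    MultilinearMap.mkPiAlgebra_apply, Module.Basis.coord_apply]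

lemma expansion (b : Module.Basis (Fin n) F M) (z : PiTensorProduct F (fun _ : Fin p => M)) :
    z = ∑ g : Fin p → Fin n, coeffMap b g z • tprod F (fun i => b (g i)) := by
  classical
  set L : PiTensorProduct F (fun _ : Fin p => M) →ₗ[F] PiTensorProduct F (fun _ : Fin p => M) :=
    ∑ g : Fin p → Fin n,
      (LinearMap.toSpanSingleton F _ (tprod F fun i => b (g i))).comp (coeffMap b g) with hLdef
  have hL : L = LinearMap.id := by
    apply PiTensorProduct.ext
    apply MultilinearMap.ext
    intro m
    simp only [LinearMap.compMultilinearMap_apply, LinearMap.id_apply, hLdef,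
      LinearMap.sum_apply, LinearMap.comp_apply, LinearMap.toSpanSingleton_apply,
      coeff_tprod]
    have hm : tprod F m = tprod F (fun i => ∑ j : Fin n, b.repr (m i) j • b j) := by
      congr 1
      funext i
      rw [Module.Basis.sum_repr]
    conv_rhs => rw [hm]
    rw [MultilinearMap.map_sum]
    refine Finset.sum_congr rfl fun r _ => ?_
    rw [MultilinearMap.map_smul_univ]
  have := congrFun (congrArg (DFunLike.coe) hL) z
  simp only [LinearMap.id_apply, hLdef, LinearMap.sum_apply, LinearMap.comp_apply,
    LinearMap.toSpanSingleton_apply] at this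
  exact this.symm

lemma coeff_perm (b : Module.Basis (Fin n) F M) (σ : Equiv.Perm (Fin p)) (g : Fin p → Fin n) :
    (coeffMap b g).comp (permMap F M p σ) = coeffMap b (fun i => g (σ i)) := by
  apply PiTensorProduct.ext
  apply MultilinearMap.ext
  intro m
  simp only [LinearMap.compMultilinearMap_apply, LinearMap.comp_apply, permMap,
    LinearEquiv.coe_coe, PiTensorProduct.reindex_tprod, coeff_tprod]
  rw [← Equiv.prod_comp σ (fun i => b.repr (m (σ.symm i)) (g i))]
  exact Finset.prod_congr rfl fun i _ => by rw [Equiv.symm_apply_apply]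

/-- The orbit equivalence relation on multi-indices. -/
def orbitSetoid (p n : ℕ) : Setoid (Fin p → Fin n) where
  r h g := ∃ σ : Equiv.Perm (Fin p), h = g ∘ σ
  iseqv := by
    refine ⟨fun g => ⟨1, ?_⟩, ?_, ?_⟩
    · funext i; simp
    · rintro h g ⟨σ, rfl⟩
      exact ⟨σ⁻¹, by funext i; simp⟩
    · rintro a b c ⟨σ, rfl⟩ ⟨τ, rfl⟩
      exact ⟨τ * σ, by funext i; simp⟩

end Aux

/-- Over a field `F` of characteristic `p` (prime) and a finite-dimensional
`F`-vector space `M`, `P_p(M) = S'_p(M)`: the span of the `p`-th tensor powers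
equals the space of symmetric tensors of degree `p`. -/
theorem stmt_17 (F : Type*) [Field F] (p : ℕ) (hp : p.Prime) [CharP F p]
    (M : Type*) [AddCommGroup M] [Module F M] [FiniteDimensional F M] :
    powersSubmodule F M p = symTensors F M p := by
  classical
  apply le_antisymm
  · rw [powersSubmodule, Submodule.span_le]
    rintro z ⟨x, rfl⟩
    rw [SetLike.mem_coe, symTensors, Submodule.mem_iInf]
    intro σ
    rw [LinearMap.mem_eqLocus]
    show permMap F M p σ _ = _
    simp only [permMap, LinearEquiv.coe_coe, PiTensorProduct.reindex_tprod, LinearMap.id_apply]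
  · intro z hz
    set n := Module.finrank F M with hn
    set b : Module.Basis (Fin n) F M := Module.finBasis F M with hb
    have hsym : ∀ σ : Equiv.Perm (Fin p), permMap F M p σ z = z := by
      intro σ
      have h1 := (Submodule.mem_iInf _).mp hz σ
      rw [LinearMap.mem_eqLocus] at h1
      exact h1
    have hinv : ∀ (σ : Equiv.Perm (Fin p)) (g : Fin p → Fin n),
        coeffMap b (fun i => g (σ i)) z = coeffMap b g z := by
      intro σ g
      rw [← coeff_perm, LinearMap.comp_apply, hsym σ]
    obtain ⟨a, hainv, hza⟩ : ∃ a : (Fin p → Fin n) → F,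
        (∀ (σ : Equiv.Perm (Fin p)) (g : Fin p → Fin n), a (fun i => g (σ i)) = a g) ∧
          z = ∑ g : Fin p → Fin n, a g • tprod F (fun i => b (g i)) :=
      ⟨fun g => coeffMap b g z, fun σ g => hinv σ g, expansion b z⟩
    letI st : Setoid (Fin p → Fin n) := orbitSetoid p n
    letI : DecidableRel st.r := fun _ _ => Classical.dec _
    rw [hza, ← Finset.sum_fiberwise univ (fun g => Quotient.mk st g)
      (fun g => a g • tprod F (fun i => b (g i)))]
    apply Submodule.sum_mem
    intro q _
    have hfq : univ.filter (fun g : Fin p → Fin n => Quotient.mk st g = q)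
        = univ.filter (fun g : Fin p → Fin n =>
            ∃ σ : Equiv.Perm (Fin p), g = Quotient.out q ∘ σ) := by
      ext g
      simp only [Finset.mem_filter, Finset.mem_univ, true_and]
      constructor
      · intro h1
        have h2 : Quotient.mk st g = Quotient.mk st (Quotient.out q) := by
          rw [h1, Quotient.out_eq]
        exact Quotient.exact h2
      · intro h1
        rw [← Quotient.out_eq q]
        exact Quotient.sound h1
    rw [hfq]
    have hconst : ∀ g ∈ univ.filter (fun g : Fin p → Fin n =>
        ∃ σ : Equiv.Perm (Fin p), g = Quotient.out q ∘ σ), a g = a (Quotient.out q) := by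
      intro g hgm
      obtain ⟨σ, rfl⟩ := (Finset.mem_filter.mp hgm).2
      exact hainv σ (Quotient.out q)
    have hstep : ∑ g ∈ univ.filter (fun g : Fin p → Fin n =>
          ∃ σ : Equiv.Perm (Fin p), g = Quotient.out q ∘ σ), a g • tprod F (fun i => b (g i))
        = a (Quotient.out q) • ∑ g ∈ univ.filter (fun g : Fin p → Fin n =>
            ∃ σ : Equiv.Perm (Fin p), g = Quotient.out q ∘ σ), tprod F (fun i => b (g i)) := by
      rw [Finset.smul_sum]
      exact Finset.sum_congr rfl fun g hgm => by rw [hconst g hgm]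
    rw [hstep]
    exact Submodule.smul_mem _ _ (orbit_sum_mem hp (fun j => b j) (Quotient.out q))
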